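/- Let A, B be bounded self-adjoint operators on a complex Hilbert space V. The block operator matrix [[A, B],[B, A]] on V ⊕ V is positive (as a self-adjoint operator) if and only if |⟨Bv, w⟩|² ≤ ⟨Av, v⟩·⟨Aw, w⟩ for all v, w ∈ V. -/

import Mathlib

open scoped ComplexInnerProductSpace ComplexOrder

private lemma quad_aux (a b c : ℝ) (ha : 0 ≤ a) (hc : 0 ≤ c)
    (h : ∀ t s : ℝ, 0 ≤ a * t ^ 2 + b * s ^ 2 - 2 * t * s * c) : c ^ 2 ≤ a * b := by
  rcases ha.eq_or_lt with rfl | ha'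
  · rcases hc.eq_or_lt with rfl | hc'
    · nlinarith [h 1 1]
    · exfalso
      have h1 := h ((b + 1) / (2 * c)) 1
      have hc0 : (2 * c) ≠ 0 := by positivity
      rw [div_pow] at h1
      have : (b + 1) / (2 * c) * 1 * c = (b + 1) / 2 := by
        field_simp
      nlinarith [h1, this, sq_nonneg (b + 1)]
  · nlinarith [h c a]

/-- For bounded self-adjoint operators `A ≥ 0` and `B = B*` on a
complex Hilbert space `V`, the block matrix `[[A,B],[B,A]]` on `V ⊕ V` is
positive iff `|⟨Bv,w⟩|² ≤ ⟨Av,v⟩⟨Aw,w⟩` for all `v, w`. -/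
theorem stmt10 {V : Type*} [NormedAddCommGroup V] [InnerProductSpace ℂ V]
    (A B : V →L[ℂ] V)
    (hA : ∀ v w, ⟪A v, w⟫ = ⟪v, A w⟫)
    (hB : ∀ v w, ⟪B v, w⟫ = ⟪v, B w⟫)
    (hApos : ∀ v, 0 ≤ ⟪v, A v⟫) :
    (∀ v w : V, 0 ≤ ⟪v, A v + B w⟫ + ⟪w, B v + A w⟫) ↔
    (∀ v w : V, ‖⟪B v, w⟫‖ ^ 2 ≤ (⟪A v, v⟫).re * (⟪A w, w⟫).re) := by
  -- notation
  have hreal : ∀ v, ⟪v, A v⟫ = ((⟪v, A v⟫.re : ℝ) : ℂ) := by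
    intro v
    have h := hApos v
    rw [Complex.le_def] at h
    exact Complex.ext (by simp) (by simp [← h.2])
  constructor
  · intro h v w
    set z : ℂ := ⟪B v, w⟫ with hz
    set a : ℝ := ⟪v, A v⟫.re with hadef
    set b : ℝ := ⟪w, A w⟫.re with hbdef
    have hvBw : ⟪v, B w⟫ = z := (hB v w).symm
    have hwBv : ⟪w, B v⟫ = (starRingEnd ℂ) z := by
      rw [← hB w v, ← inner_conj_symm, hvBw]
    -- a unimodular u with conj u * z = -|z|
    obtain ⟨u, hu1, hu2⟩ : ∃ u : ℂ, (starRingEnd ℂ) u * z = -(‖z‖ : ℂ) ∧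
        (starRingEnd ℂ) u * u = 1 := by
      rcases eq_or_ne z 0 with hz0 | hz0
      · exact ⟨1, by simp [hz0], by simp⟩
      · refine ⟨-(z / (‖z‖ : ℂ)), ?_, ?_⟩
        · have habs : ((‖z‖ : ℝ) : ℂ) ≠ 0 := by
            simpa using (norm_ne_zero_iff.mpr hz0)
          have hc : (starRingEnd ℂ) z * z = (‖z‖ : ℂ) ^ 2 := Complex.conj_mul' z
          rw [map_neg, map_div₀, Complex.conj_ofReal, neg_mul, div_mul_eq_mul_div, hc]
          field_simp
        · have habs : ((‖z‖ : ℝ) : ℂ) ≠ 0 := by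
            simpa using (norm_ne_zero_iff.mpr hz0)
          have hc : (starRingEnd ℂ) z * z = (‖z‖ : ℂ) ^ 2 := Complex.conj_mul' z
          rw [map_neg, map_div₀, Complex.conj_ofReal, neg_mul_neg, div_mul_div_comm, hc]
          field_simp
    have key : ∀ t s : ℝ, 0 ≤ a * t ^ 2 + b * s ^ 2 - 2 * t * s * ‖z‖ := by
      intro t s
      have h1 := h (((t : ℂ) * u) • v) ((s : ℂ) • w)
      rw [inner_add_right, inner_add_right, map_smul, map_smul, map_smul, map_smul,
        inner_smul_left, inner_smul_left, inner_smul_right, inner_smul_right,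
        inner_smul_left, inner_smul_left, inner_smul_right, inner_smul_right,
        hvBw, hwBv, hreal v, hreal w] at h1
      have hu1' : u * (starRingEnd ℂ) z = -((‖z‖ : ℝ) : ℂ) := by
        have h3 := congrArg (starRingEnd ℂ) hu1
        simpa [map_mul, Complex.conj_conj, Complex.conj_ofReal] using h3
      have h2 := h1.trans_eq (show _ =
          ((a * t ^ 2 + b * s ^ 2 - 2 * t * s * ‖z‖ : ℝ) : ℂ) by
        rw [← hadef, ← hbdef]
        simp only [map_mul, Complex.conj_ofReal]
        push_cast
        linear_combination ((t : ℂ) * s) * hu1 + (t : ℂ) * s * hu1' +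
          (t : ℂ) ^ 2 * (a : ℂ) * hu2)
      rw [Complex.zero_le_real] at h2
      exact h2
    have ha : 0 ≤ a := by
      have h := hApos v; rw [Complex.le_def] at h; simpa using h.1
    have := quad_aux a b (‖z‖) ha (norm_nonneg z) key
    rw [hA v v, hA w w]
    exact this
  · intro h v w
    set z : ℂ := ⟪B v, w⟫ with hz
    set a : ℝ := ⟪v, A v⟫.re with hadef
    set b : ℝ := ⟪w, A w⟫.re with hbdef
    have hvBw : ⟪v, B w⟫ = z := (hB v w).symm
    have hwBv : ⟪w, B v⟫ = (starRingEnd ℂ) z := by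
      rw [← hB w v, ← inner_conj_symm, hvBw]
    rw [inner_add_right, inner_add_right, hvBw, hwBv, hreal v, hreal w]
    have hsum : ((a : ℂ)) + z + ((starRingEnd ℂ) z + (b : ℂ)) =
        ((a + b + 2 * z.re : ℝ) : ℂ) := by
      apply Complex.ext
      · simp [Complex.conj_re]; ring
      · simp [Complex.conj_im]
    rw [← hadef, ← hbdef, hsum, Complex.zero_le_real]
    have habs := h v w
    rw [hA v v, hA w w, ← hadef, ← hbdef, ← hz] at habs
    have ha : 0 ≤ a := by
      have h := hApos v; rw [Complex.le_def] at h; simpa using h.1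
    have hb : 0 ≤ b := by
      have h := hApos w; rw [Complex.le_def] at h; simpa using h.1
    have h1 : -‖z‖ ≤ z.re := by
      have := Complex.abs_re_le_norm z
      have := neg_abs_le z.re
      linarith
    nlinarith [norm_nonneg z, sq_nonneg (a - b), sq_nonneg (a + b - 2 * ‖z‖)]
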